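/- Let v_1,…,v_q ∈ ℝⁿ be such that P := conv{v_1,…,v_q} has nonempty interior, let V ∈ ℝ^{n×q} be the matrix with columns v_i, and let (Ω, μ) be a finite measure space. If η : Ω → ℝⁿ is measurable and essentially bounded with η(x) ∈ P for a.e. x ∈ Ω and ess inf_{x∈Ω} dist(η(x), ∂P) > 0, then there exists a measurable, essentially bounded ψ : Ω → ℝⁿ such that η(x) = V softmax(Vᵀψ(x)) for a.e. x ∈ Ω. -/

import Mathlib

open Real MeasureTheory
open scoped RealInnerProductSpace

/-- The softmax map `softmax(y)_i = exp(y_i) / Σ_j exp(y_j)`. -/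
noncomputable def softmax {m : ℕ} (y : Fin m → ℝ) : Fin m → ℝ :=
  fun i => Real.exp (y i) / ∑ j, Real.exp (y j)

/-- The latent-to-design map `Φ(y) = V softmax (Vᵀ y) = Σ_i softmax(Vᵀy)_i v_i`,
where `(Vᵀy)_i = ⟨v_i, y⟩`. -/
noncomputable def Phi {n q : ℕ} (v : Fin q → EuclideanSpace ℝ (Fin n))
    (y : EuclideanSpace ℝ (Fin n)) : EuclideanSpace ℝ (Fin n) :=
  ∑ i, softmax (fun i : Fin q => ⟪v i, y⟫) i • v i

section Aux
open Set

lemma aux_nonempty {n q : ℕ} (v : Fin q → EuclideanSpace ℝ (Fin n))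
    (hint : (interior (convexHull ℝ (Set.range v))).Nonempty) : Nonempty (Fin q) := by
  rcases isEmpty_or_nonempty (Fin q) with h | h
  · rw [Set.range_eq_empty v, convexHull_empty, interior_empty] at hint
    exact absurd hint Set.not_nonempty_empty
  · exact h

lemma aux_inner_const {n q : ℕ} (v : Fin q → EuclideanSpace ℝ (Fin n))
    (hint : (interior (convexHull ℝ (Set.range v))).Nonempty)
    {e : EuclideanSpace ℝ (Fin n)} {κ : ℝ} (hvk : ∀ i, ⟪v i, e⟫ = κ) : e = 0 := by
  by_contra hne
  have hlin : IsLinearMap ℝ (fun x : EuclideanSpace ℝ (Fin n) => ⟪x, e⟫) :=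
    ⟨fun a b => inner_add_left a b e, fun c a => real_inner_smul_left a e c⟩
  have hsub : convexHull ℝ (Set.range v) ⊆ {x | ⟪x, e⟫ = κ} := by
    apply convexHull_min _ (convex_hyperplane hlin κ)
    rintro x ⟨i, rfl⟩
    exact hvk i
  obtain ⟨x, hx⟩ := hint
  have hx' : x ∈ interior {x : EuclideanSpace ℝ (Fin n) | ⟪x, e⟫ = κ} :=
    interior_mono hsub hx
  obtain ⟨r, hr, hball⟩ := Metric.mem_nhds_iff.mp (mem_interior_iff_mem_nhds.mp hx')
  have hepos : (0:ℝ) < ‖e‖ := norm_pos_iff.mpr hne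
  set x' := x + (r / (2 * ‖e‖)) • e with hx'def
  have hx'mem : x' ∈ Metric.ball x r := by
    rw [Metric.mem_ball, dist_eq_norm]
    have : x' - x = (r / (2 * ‖e‖)) • e := by rw [hx'def]; abel
    rw [this, norm_smul]
    rw [Real.norm_eq_abs, abs_of_pos (by positivity)]
    rw [div_mul_eq_mul_div, mul_comm]
    rw [div_lt_iff₀ (by positivity)]
    nlinarith
  have h1 : ⟪x', e⟫ = κ := hball hx'mem
  have h2 : ⟪x, e⟫ = κ := hball (Metric.mem_ball_self hr)
  rw [hx'def, inner_add_left, real_inner_smul_left, h2, real_inner_self_eq_norm_sq] at h1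
  have : r / (2 * ‖e‖) * ‖e‖ ^ 2 > 0 := by positivity
  linarith


lemma aux_Zpos {n q : ℕ} [Nonempty (Fin q)] (v : Fin q → EuclideanSpace ℝ (Fin n))
    (y : EuclideanSpace ℝ (Fin n)) : 0 < ∑ i, Real.exp ⟪v i, y⟫ :=
  Finset.sum_pos (fun i _ => Real.exp_pos _) Finset.univ_nonempty

lemma aux_inner_phi {n q : ℕ} [Nonempty (Fin q)] (v : Fin q → EuclideanSpace ℝ (Fin n))
    (y w : EuclideanSpace ℝ (Fin n)) :
    ⟪Phi v y, w⟫ = ∑ i, (Real.exp ⟪v i, y⟫ / ∑ j, Real.exp ⟪v j, y⟫) * ⟪v i, w⟫ := by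
  rw [Phi, sum_inner]
  refine Finset.sum_congr rfl fun i _ => ?_
  rw [real_inner_smul_left, softmax]

/-- Strict Gibbs inequality. -/
lemma aux_gibbs {n q : ℕ} [Nonempty (Fin q)] (v : Fin q → EuclideanSpace ℝ (Fin n))
    (y z : EuclideanSpace ℝ (Fin n))
    (hne : ∃ j k : Fin q, ⟪v j, z - y⟫ ≠ ⟪v k, z - y⟫) :
    ⟪Phi v y, z - y⟫ <
      Real.log (∑ i, Real.exp ⟪v i, z⟫) - Real.log (∑ i, Real.exp ⟪v i, y⟫) := by
  set Za := ∑ i, Real.exp ⟪v i, y⟫ with hZa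
  set Zc := ∑ i, Real.exp ⟪v i, z⟫ with hZc
  have hZapos : 0 < Za := aux_Zpos v y
  have hZcpos : 0 < Zc := aux_Zpos v z
  set s : Fin q → ℝ := fun i => Real.exp ⟪v i, y⟫ / Za with hs
  set x : Fin q → ℝ := fun i => Real.exp ⟪v i, z - y⟫ with hx
  have hspos : ∀ i ∈ Finset.univ, 0 < s i := fun i _ => div_pos (Real.exp_pos _) hZapos
  have hssum : ∑ i, s i = 1 := by
    rw [hs, ← Finset.sum_div, ← hZa, div_self (ne_of_gt hZapos)]
  have hxmem : ∀ i ∈ Finset.univ, x i ∈ Set.Ioi (0:ℝ) := fun i _ => Real.exp_pos _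
  have hxne : ∃ j ∈ Finset.univ, ∃ k ∈ Finset.univ, x j ≠ x k := by
    obtain ⟨j, k, hjk⟩ := hne
    exact ⟨j, Finset.mem_univ j, k, Finset.mem_univ k, fun hc => hjk (Real.exp_injective hc)⟩
  have hjensen := strictConcaveOn_log_Ioi.lt_map_sum hspos hssum hxmem hxne
  have hsum : ∑ i, s i • x i = Zc / Za := by
    rw [Finset.sum_div]
    refine Finset.sum_congr rfl fun i _ => ?_
    rw [smul_eq_mul, hs, hx]
    simp only [inner_sub_right]
    rw [Real.exp_sub]
    field_simp
  rw [hsum] at hjensen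
  have hlog : Real.log (Zc / Za) = Real.log Zc - Real.log Za :=
    Real.log_div (ne_of_gt hZcpos) (ne_of_gt hZapos)
  rw [hlog] at hjensen
  refine lt_of_le_of_lt (le_of_eq ?_) hjensen
  rw [aux_inner_phi]
  refine Finset.sum_congr rfl fun i _ => ?_
  rw [smul_eq_mul, hx, Real.log_exp, hs]

lemma aux_inj {n q : ℕ} (v : Fin q → EuclideanSpace ℝ (Fin n))
    (hint : (interior (convexHull ℝ (Set.range v))).Nonempty) :
    Function.Injective (Phi v) := by
  haveI : Nonempty (Fin q) := by
    rcases isEmpty_or_nonempty (Fin q) with h | h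
    · rw [Set.range_eq_empty v, convexHull_empty, interior_empty] at hint
      exact absurd hint Set.not_nonempty_empty
    · exact h
  intro y z hyz
  by_contra hne
  have hd : z - y ≠ 0 := sub_ne_zero.mpr (Ne.symm hne)
  have hex : ∃ j k : Fin q, ⟪v j, z - y⟫ ≠ ⟪v k, z - y⟫ := by
    by_contra hc
    push_neg at hc
    obtain ⟨k₀⟩ := ‹Nonempty (Fin q)›
    exact hd (aux_inner_const v hint (κ := ⟪v k₀, z - y⟫) (fun i => hc i k₀))
  have hex' : ∃ j k : Fin q, ⟪v j, y - z⟫ ≠ ⟪v k, y - z⟫ := by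
    obtain ⟨j, k, hjk⟩ := hex
    have key : ∀ i : Fin q, ⟪v i, y - z⟫ = -⟪v i, z - y⟫ := fun i => by
      rw [← inner_neg_right, neg_sub]
    refine ⟨j, k, fun hc => hjk ?_⟩
    rw [key j, key k] at hc
    exact neg_injective hc
  have g1 := aux_gibbs v y z hex
  have g2 := aux_gibbs v z y hex'
  rw [hyz] at g1
  have hsum : ⟪Phi v z, z - y⟫ + ⟪Phi v z, y - z⟫ = 0 := by
    rw [← inner_add_right]
    simp
  linarith
lemma aux_hasFDerivAt {n q : ℕ} [Nonempty (Fin q)] (v : Fin q → EuclideanSpace ℝ (Fin n))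
    (p y : EuclideanSpace ℝ (Fin n)) :
    HasFDerivAt (fun w : EuclideanSpace ℝ (Fin n) => Real.log (∑ i, Real.exp ⟪v i, w⟫) - ⟪p, w⟫)
      ((∑ i, Real.exp ⟪v i, y⟫)⁻¹ • (∑ i, Real.exp ⟪v i, y⟫ • (innerSL ℝ (v i)))
        - innerSL ℝ p) y := by
  have hZ : HasFDerivAt (fun w : EuclideanSpace ℝ (Fin n) => ∑ i, Real.exp ⟪v i, w⟫)
      (∑ i, Real.exp ⟪v i, y⟫ • (innerSL ℝ (v i))) y := by
    apply HasFDerivAt.fun_sum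
    intro i _
    exact ((innerSL ℝ (v i)).hasFDerivAt).exp
  have hlog := hZ.log (ne_of_gt (aux_Zpos v y))
  exact hlog.sub ((innerSL ℝ p).hasFDerivAt)

lemma aux_crit {n q : ℕ} [Nonempty (Fin q)] (v : Fin q → EuclideanSpace ℝ (Fin n))
    (p y : EuclideanSpace ℝ (Fin n))
    (h : ((∑ i, Real.exp ⟪v i, y⟫)⁻¹ • (∑ i, Real.exp ⟪v i, y⟫ • (innerSL ℝ (v i)))
        - innerSL ℝ p) = 0) : Phi v y = p := by
  set w : EuclideanSpace ℝ (Fin n) := Phi v y - p with hw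
  have hzero := DFunLike.congr_fun h w
  simp only [ContinuousLinearMap.sub_apply, ContinuousLinearMap.smul_apply,
    ContinuousLinearMap.coe_sum', Finset.sum_apply, innerSL_apply_apply,
    ContinuousLinearMap.zero_apply, smul_eq_mul] at hzero
  have hphi : ⟪Phi v y, w⟫ = (∑ i, Real.exp ⟪v i, y⟫)⁻¹ * ∑ i, Real.exp ⟪v i, y⟫ * ⟪v i, w⟫ := by
    rw [Phi, sum_inner, Finset.mul_sum]
    refine Finset.sum_congr rfl fun i _ => ?_
    rw [real_inner_smul_left, softmax]
    field_simp
  have : ⟪Phi v y - p, w⟫ = 0 := by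
    rw [inner_sub_left, hphi]
    linarith
  rw [← hw, inner_self_eq_zero] at this
  rw [hw] at this
  exact sub_eq_zero.mp this


open Set.Notation in
lemma aux_ball_subset_interior {α : Type*} [NormedAddCommGroup α] [NormedSpace ℝ α]
    {s : Set α} {p : α} {ε : ℝ} (hε : 0 < ε) (hp : p ∈ closure s)
    (h : ε ≤ Metric.infDist p (frontier s)) : Metric.ball p ε ⊆ interior s := by
  have hdisj : Disjoint (frontier (interior s)) (Metric.ball p ε) := by
    rw [Set.disjoint_left]
    intro w hw hwb
    have hw' : w ∈ frontier s := frontier_interior_subset hw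
    have h2 : Metric.infDist p (frontier s) ≤ dist p w :=
      Metric.infDist_le_dist_of_mem hw'
    have h3 : dist p w < ε := by simpa [dist_comm] using hwb
    linarith
  have hpi : p ∈ interior s := by
    have hpf : p ∉ frontier s := by
      intro hpf
      have h2 : Metric.infDist p (frontier s) ≤ dist p p :=
        Metric.infDist_le_dist_of_mem hpf
      simp at h2
      linarith
    rcases (closure_eq_interior_union_frontier s ▸ hp) with h' | h'
    · exact h'
    · exact absurd h' hpf
  have hco : IsClopen ((Metric.ball p ε) ↓∩ interior s) :=
    isClopen_preimage_val isOpen_interior hdisj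
  haveI : PreconnectedSpace ↥(Metric.ball p ε) :=
    Subtype.preconnectedSpace (convex_ball p ε).isPreconnected
  have huniv : ((Metric.ball p ε) ↓∩ interior s) = Set.univ :=
    hco.eq_univ ⟨⟨p, Metric.mem_ball_self hε⟩, hpi⟩
  intro z hz
  have : (⟨z, hz⟩ : ↥(Metric.ball p ε)) ∈ ((Metric.ball p ε) ↓∩ interior s) := by
    rw [huniv]; trivial
  exact this

lemma aux_surj {n q : ℕ} (v : Fin q → EuclideanSpace ℝ (Fin n))
    (hint : (interior (convexHull ℝ (Set.range v))).Nonempty)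
    {ε : ℝ} (hε : 0 < ε) (p : EuclideanSpace ℝ (Fin n))
    (hp : p ∈ convexHull ℝ (Set.range v))
    (hd : ε ≤ Metric.infDist p (frontier (convexHull ℝ (Set.range v)))) :
    ∃ y : EuclideanSpace ℝ (Fin n), ‖y‖ ≤ 2 * Real.log q / ε + 1 ∧ Phi v y = p := by
  haveI hq : Nonempty (Fin q) := by
    rcases isEmpty_or_nonempty (Fin q) with h | h
    · rw [Set.range_eq_empty v, convexHull_empty, interior_empty] at hint
      exact absurd hint Set.not_nonempty_empty
    · exact h
  have hq1 : (1:ℝ) ≤ q := by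
    have := Fin.pos_iff_nonempty.mpr hq
    exact_mod_cast this
  have hlogq : 0 ≤ Real.log q := Real.log_nonneg hq1
  set F : EuclideanSpace ℝ (Fin n) → ℝ :=
    fun w => Real.log (∑ i, Real.exp ⟪v i, w⟫) - ⟪p, w⟫ with hF
  set R : ℝ := 2 * Real.log q / ε + 1 with hR
  have hRpos : 0 < R := by positivity
  have hF0 : F 0 = Real.log q := by
    simp [hF, inner_zero_right]
  -- lower bound
  have hlb : ∀ w : EuclideanSpace ℝ (Fin n), ε / 2 * ‖w‖ ≤ F w := by
    intro w
    rcases eq_or_ne w 0 with rfl | hw0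
    · simpa [hF0] using hlogq
    · have hnw : (0:ℝ) < ‖w‖ := norm_pos_iff.mpr hw0
      set z : EuclideanSpace ℝ (Fin n) := p + ((ε/2) / ‖w‖) • w with hz
      have hzball : z ∈ Metric.ball p ε := by
        rw [Metric.mem_ball, dist_eq_norm]
        have : z - p = ((ε/2) / ‖w‖) • w := by rw [hz]; abel
        rw [this, norm_smul, Real.norm_eq_abs, abs_of_pos (by positivity),
          div_mul_cancel₀ _ (ne_of_gt hnw)]
        linarith
      have hzP : z ∈ convexHull ℝ (Set.range v) :=
        interior_subset (aux_ball_subset_interior hε (subset_closure hp) hd hzball)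
      set M : ℝ := Finset.univ.sup' Finset.univ_nonempty (fun i => ⟪v i, w⟫) with hM
      have hzM : ⟪z, w⟫ ≤ M := by
        have hlin : IsLinearMap ℝ (fun x : EuclideanSpace ℝ (Fin n) => ⟪x, w⟫) :=
          ⟨fun a b => inner_add_left a b w, fun c a => real_inner_smul_left a w c⟩
        have hsub : convexHull ℝ (Set.range v) ⊆ {x | ⟪x, w⟫ ≤ M} := by
          apply convexHull_min _ (convex_halfSpace_le hlin M)
          rintro x ⟨i, rfl⟩
          show ⟪v i, w⟫ ≤ M
          exact Finset.le_sup' (fun j : Fin q => (⟪v j, w⟫ : ℝ)) (Finset.mem_univ i)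
        exact hsub hzP
      have hMF : M ≤ Real.log (∑ i, Real.exp ⟪v i, w⟫) := by
        obtain ⟨i0, _, hi0⟩ := Finset.exists_mem_eq_sup' (Finset.univ_nonempty (α := Fin q))
          (fun j : Fin q => (⟪v j, w⟫ : ℝ))
        have hle : Real.exp M ≤ ∑ i, Real.exp ⟪v i, w⟫ := by
          rw [hM, hi0]
          exact Finset.single_le_sum (f := fun i : Fin q => Real.exp ⟪v i, w⟫) (fun i _ => (Real.exp_pos _).le) (Finset.mem_univ i0)
        calc M = Real.log (Real.exp M) := (Real.log_exp M).symm
          _ ≤ _ := Real.log_le_log (Real.exp_pos _) hle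
      have hzw : ⟪z, w⟫ - ⟪p, w⟫ = ε / 2 * ‖w‖ := by
        rw [hz, inner_add_left, real_inner_smul_left, real_inner_self_eq_norm_mul_norm]
        field_simp
        ring
      have : ε / 2 * ‖w‖ ≤ M - ⟪p, w⟫ := by linarith
      calc ε / 2 * ‖w‖ ≤ M - ⟪p, w⟫ := this
        _ ≤ F w := by rw [hF]; simp only []; linarith
  -- continuity
  have hcont : Continuous F := by
    apply Continuous.sub
    · apply Continuous.log
      · exact continuous_finset_sum _ fun i _ =>
          (Real.continuous_exp.comp (continuous_const.inner continuous_id))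
      · exact fun w => ne_of_gt (aux_Zpos v w)
    · exact continuous_const.inner continuous_id
  obtain ⟨y0, hy0mem, hmin⟩ := (isCompact_closedBall (0 : EuclideanSpace ℝ (Fin n)) R).exists_isMinOn
    ⟨0, by simp [hRpos.le]⟩ hcont.continuousOn
  have hy0le : F y0 ≤ Real.log q := by
    have h := hmin (by simp [hRpos.le] : (0 : EuclideanSpace ℝ (Fin n)) ∈ Metric.closedBall 0 R)
    simp only [Set.mem_setOf_eq] at h
    rwa [hF0] at h
  have hy0R : ‖y0‖ ≤ R := by rwa [Metric.mem_closedBall, dist_zero_right] at hy0mem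
  have hy0lt : ‖y0‖ < R := by
    by_contra hcon
    push_neg at hcon
    have h1 : ε / 2 * ‖y0‖ ≤ Real.log q := le_trans (hlb y0) hy0le
    have h2 : ε / 2 * R ≤ ε / 2 * ‖y0‖ :=
      mul_le_mul_of_nonneg_left hcon (by positivity)
    have h3 : ε / 2 * R = Real.log q + ε / 2 := by
      rw [hR]; field_simp
    linarith
  have hnhds : Metric.closedBall (0 : EuclideanSpace ℝ (Fin n)) R ∈ nhds y0 :=
    mem_nhds_iff.mpr ⟨Metric.ball 0 R, Metric.ball_subset_closedBall, Metric.isOpen_ball,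
      by rwa [Metric.mem_ball, dist_zero_right]⟩
  have hloc : IsLocalMin F y0 := hmin.isLocalMin hnhds
  have hDzero := hloc.hasFDerivAt_eq_zero (aux_hasFDerivAt v p y0)
  exact ⟨y0, hy0R, aux_crit v p y0 hDzero⟩

lemma aux_Zpos' {n q : ℕ} [Nonempty (Fin q)] (v : Fin q → EuclideanSpace ℝ (Fin n))
    (y : EuclideanSpace ℝ (Fin n)) : 0 < ∑ i, Real.exp ⟪v i, y⟫ :=
  Finset.sum_pos (fun _ _ => Real.exp_pos _) Finset.univ_nonempty

lemma aux_phi_cont {n q : ℕ} [Nonempty (Fin q)] (v : Fin q → EuclideanSpace ℝ (Fin n)) :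
    Continuous (Phi v) := by
  unfold Phi softmax
  apply continuous_finset_sum
  intro i _
  apply Continuous.fun_smul _ continuous_const
  apply Continuous.div
  · exact Real.continuous_exp.comp (continuous_const.inner continuous_id)
  · exact continuous_finset_sum _ fun j _ =>
      Real.continuous_exp.comp (continuous_const.inner continuous_id)
  · exact fun y => ne_of_gt (aux_Zpos' v y)

lemma aux_invFun_meas {n q : ℕ} (v : Fin q → EuclideanSpace ℝ (Fin n)) [Nonempty (Fin q)]
    (hinj : Function.Injective (Phi v)) :
    Measurable (Function.invFun (Phi v)) := by
  have hemb : MeasurableEmbedding (Phi v) := (aux_phi_cont v).measurableEmbedding hinj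
  intro S hS
  have hrange : MeasurableSet (Set.range (Phi v)) := hemb.measurableSet_range
  have himg : MeasurableSet (Phi v '' S) := hemb.measurableSet_image' hS
  have hjunk : ∀ b : EuclideanSpace ℝ (Fin n), b ∉ Set.range (Phi v) →
      Function.invFun (Phi v) b = Classical.arbitrary _ := by
    intro b hb
    rw [Function.invFun, dif_neg]
    simpa [Set.mem_range] using hb
  by_cases hc : (Classical.arbitrary (EuclideanSpace ℝ (Fin n))) ∈ S
  · have heq : Function.invFun (Phi v) ⁻¹' S = Phi v '' S ∪ (Set.range (Phi v))ᶜ := by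
      ext b
      simp only [Set.mem_preimage, Set.mem_union, Set.mem_compl_iff]
      constructor
      · intro hb
        rcases em (b ∈ Set.range (Phi v)) with ⟨a, rfl⟩ | hbr
        · left
          refine ⟨a, ?_, rfl⟩
          rwa [Function.leftInverse_invFun hinj a] at hb
        · right; exact hbr
      · rintro (⟨a, ha, rfl⟩ | hb)
        · rwa [Function.leftInverse_invFun hinj a]
        · rw [hjunk b hb]; exact hc
    rw [heq]
    exact himg.union hrange.compl
  · have heq : Function.invFun (Phi v) ⁻¹' S = Phi v '' S := by
      ext b
      simp only [Set.mem_preimage]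
      constructor
      · intro hb
        rcases em (b ∈ Set.range (Phi v)) with ⟨a, rfl⟩ | hbr
        · refine ⟨a, ?_, rfl⟩
          rwa [Function.leftInverse_invFun hinj a] at hb
        · exact absurd (hjunk b hbr ▸ hb) hc
      · rintro ⟨a, ha, rfl⟩
        rwa [Function.leftInverse_invFun hinj a]
    rw [heq]
    exact himg

end Aux

/-- Let `P = conv {v_1, …, v_q} ⊂ ℝⁿ` have nonempty interior and let
`(Ω, μ)` be a finite measure space.  If `η : Ω → ℝⁿ` is measurable, essentially
bounded, takes values in `P` a.e., and satisfies `ess inf_x dist(η(x), ∂P) > 0`,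
then there is a measurable, essentially bounded latent variable `ψ : Ω → ℝⁿ` with
`η(x) = V softmax (Vᵀ ψ(x))` for a.e. `x`. -/
theorem latent_parametrization_exists {n q : ℕ}
    (v : Fin q → EuclideanSpace ℝ (Fin n))
    (hint : (interior (convexHull ℝ (Set.range v))).Nonempty)
    {Ω : Type*} [MeasurableSpace Ω] (μ : Measure Ω) [IsFiniteMeasure μ]
    (η : Ω → EuclideanSpace ℝ (Fin n)) (hmeas : Measurable η)
    (hbdd : ∃ C : ℝ, ∀ᵐ x ∂μ, ‖η x‖ ≤ C)
    (hP : ∀ᵐ x ∂μ, η x ∈ convexHull ℝ (Set.range v))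
    (hdist : ∃ ε > 0, ∀ᵐ x ∂μ,
      ε ≤ Metric.infDist (η x) (frontier (convexHull ℝ (Set.range v)))) :
    ∃ ψ : Ω → EuclideanSpace ℝ (Fin n), Measurable ψ ∧
      (∃ C : ℝ, ∀ᵐ x ∂μ, ‖ψ x‖ ≤ C) ∧
      ∀ᵐ x ∂μ, η x = Phi v (ψ x) := by
  obtain ⟨ε, hε, hdist⟩ := hdist
  haveI hq : Nonempty (Fin q) := aux_nonempty v hint
  have hinj := aux_inj v hint
  refine ⟨fun x => Function.invFun (Phi v) (η x),
    (aux_invFun_meas v hinj).comp hmeas, ⟨2 * Real.log q / ε + 1, ?_⟩, ?_⟩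
  · filter_upwards [hP, hdist] with x h1 h2
    obtain ⟨y, hyR, hy⟩ := aux_surj v hint hε (η x) h1 h2
    have h3 : Phi v (Function.invFun (Phi v) (η x)) = η x := Function.invFun_eq ⟨y, hy⟩
    have h4 : Function.invFun (Phi v) (η x) = y := hinj (by rw [h3, ← hy])
    rw [h4]
    exact hyR
  · filter_upwards [hP, hdist] with x h1 h2
    obtain ⟨y, _, hy⟩ := aux_surj v hint hε (η x) h1 h2
    exact (Function.invFun_eq ⟨y, hy⟩).symm
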